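/- Let p be a prime and let k, m, n be positive integers such that k divides (p^m−1)/(p−1) and n = (p^m−1)/k is a primitive divisor of p^m−1. For β ∈ F_{p^m} let λ_β = Σ_{r ∈ R_k} ζ_p^{Tr_{p^m/p}(βr)} ∈ ℂ, where R_k = {x^k : x ∈ F_{p^m}^*} (the set of nonzero k-th powers, each counted once), ζ_p = e^{2πi/p} and Tr_{p^m/p} is the field trace; λ_β is the eigenvalue of the generalized Paley graph Γ(k, p^m) associated with β. Then for every β ∈ F_{p^m}, 1 + #{(x,y) ∈ F_{p^m} × F_{p^m} : y^p − y = βx^k} = p^m + p + k(p−1)·λ_β, an equality of complex numbers; in particular λ_β is a rational integer. -/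

import Mathlib

open scoped BigOperators

/-- `n` is a primitive divisor of `p^m - 1`. -/
def IsPrimitiveDivisor (n p m : ℕ) : Prop :=
  n ∣ p ^ m - 1 ∧ ∀ t : ℕ, 1 ≤ t → t < m → ¬ n ∣ p ^ t - 1

/-- `ζ_p = e^(2πi/p)`. -/
noncomputable def zetaP (p : ℕ) : ℂ := Complex.exp (2 * Real.pi * Complex.I / p)

/-- The eigenvalue `λ_β = Σ_{r ∈ R_k} ζ_p^(Tr(β r))` of the generalized Paley graph
`Γ(k, q)`, where `R_k` is the set of nonzero `k`-th powers (each counted once). -/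
noncomputable def paleyEig (p : ℕ) (F : Type) [Field F] [Fintype F] [DecidableEq F]
    [Algebra (ZMod p) F] (k : ℕ) (β : F) : ℂ :=
  ∑ r ∈ Finset.image (fun x : F => x ^ k) (Finset.univ.filter fun x : F => x ≠ 0),
    zetaP p ^ ((Algebra.trace (ZMod p) F (β * r)).val : ℕ)

open Finset

private lemma fiber_card_eq' {G H : Type*} [AddCommGroup G] [Fintype G] [DecidableEq G]
    [AddCommGroup H] [DecidableEq H] (f : G →+ H) {c : H} (y0 : G) (h0 : f y0 = c) :
    (Finset.univ.filter fun y => f y = c).card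
      = (Finset.univ.filter fun y => f y = 0).card := by
  apply Finset.card_nbij' (fun y => y - y0) (fun y => y + y0)
  · intro a ha; simp only [mem_coe, mem_filter, mem_univ, true_and] at *
    rw [map_sub, ha, h0, sub_self]
  · intro a ha; simp only [mem_coe, mem_filter, mem_univ, true_and] at *
    rw [map_add, ha, h0, zero_add]
  · intro a _; simp
  · intro a _; simp

private lemma AS_count' (p m : ℕ) (hp : p.Prime) (hm : 0 < m)
    (F : Type) [Field F] [Fintype F] [DecidableEq F] [Algebra (ZMod p) F]
    (hF : Fintype.card F = p ^ m) (c : F) :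
    (Finset.univ.filter fun y : F => y ^ p - y = c).card
      = if Algebra.trace (ZMod p) F c = 0 then p else 0 := by
  haveI : Fact p.Prime := ⟨hp⟩
  haveI hchar : CharP F p := charP_of_injective_algebraMap (algebraMap (ZMod p) F).injective p
  haveI : ExpChar F p := ExpChar.prime hp
  set Tr := Algebra.trace (ZMod p) F with hTr
  set φ : F →+ F := { toFun := fun y => y ^ p - y,
                      map_zero' := by simp [hp.ne_zero],
                      map_add' := fun a b => by simp only [add_pow_char]; ring
                    } with hφ
  have hφapp : ∀ y : F, φ y = y ^ p - y := fun y => rfl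
  -- kernel has cardinality p
  have hker : (Finset.univ.filter fun y : F => φ y = 0).card = p := by
    have hset : (Finset.univ.filter fun y : F => φ y = 0)
        = (Finset.univ.filter fun y : F => y ^ p = y) := by
      apply Finset.filter_congr; intro y _; rw [hφapp, sub_eq_zero]
    have h1 : (Polynomial.X : Polynomial F).degree < (Polynomial.X ^ p : Polynomial F).degree := by
      rw [Polynomial.degree_X, Polynomial.degree_X_pow]; exact_mod_cast hp.one_lt
    have hdeg : (Polynomial.X ^ p - Polynomial.X : Polynomial F).degree = p := by
      rw [Polynomial.degree_sub_eq_left_of_degree_lt h1, Polynomial.degree_X_pow]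
    have hne : (Polynomial.X ^ p - Polynomial.X : Polynomial F) ≠ 0 := by
      intro h; rw [h, Polynomial.degree_zero] at hdeg; exact absurd hdeg (by simp)
    have hnatdeg : (Polynomial.X ^ p - Polynomial.X : Polynomial F).natDegree = p :=
      Polynomial.natDegree_eq_of_degree_eq_some hdeg
    rw [hset]
    apply le_antisymm
    · have hsub : (Finset.univ.filter fun y : F => y ^ p = y)
          ⊆ (Polynomial.X ^ p - Polynomial.X : Polynomial F).roots.toFinset := by
        intro y hy
        rw [Finset.mem_filter] at hy
        rw [Multiset.mem_toFinset, Polynomial.mem_roots hne]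
        simp [Polynomial.IsRoot, sub_eq_zero, hy.2]
      calc (Finset.univ.filter fun y : F => y ^ p = y).card
          ≤ (Polynomial.X ^ p - Polynomial.X : Polynomial F).roots.toFinset.card :=
            Finset.card_le_card hsub
        _ ≤ Multiset.card (Polynomial.X ^ p - Polynomial.X : Polynomial F).roots :=
            Multiset.toFinset_card_le _
        _ ≤ (Polynomial.X ^ p - Polynomial.X : Polynomial F).natDegree :=
            Polynomial.card_roots' _
        _ = p := hnatdeg
    · have himg : (Finset.univ.image (algebraMap (ZMod p) F))
          ⊆ (Finset.univ.filter fun y : F => y ^ p = y) := by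
        intro y hy
        rw [Finset.mem_image] at hy
        obtain ⟨a, -, rfl⟩ := hy
        rw [Finset.mem_filter]
        exact ⟨Finset.mem_univ _, by rw [← map_pow, ZMod.pow_card]⟩
      calc p = Fintype.card (ZMod p) := (ZMod.card p).symm
        _ = (Finset.univ.image (algebraMap (ZMod p) F)).card :=
            (Finset.card_image_of_injective _ (algebraMap (ZMod p) F).injective).symm
        _ ≤ _ := Finset.card_le_card himg
  -- trace kills the image of φ
  have htr0 : ∀ y : F, Tr (φ y) = 0 := by
    have hbij : Function.Bijective (frobenius F p) :=
      (Finite.injective_iff_bijective).mp (frobenius F p).injective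
    set σ : F ≃ₐ[ZMod p] F := AlgEquiv.ofBijective
      { toRingHom := frobenius F p,
        commutes' := fun a => by
          show frobenius F p ((algebraMap (ZMod p) F) a) = (algebraMap (ZMod p) F) a
          rw [frobenius_def, ← map_pow, ZMod.pow_card] } hbij with hσ
    intro y
    have h1 : Tr (σ y) = Tr y := Algebra.trace_eq_of_algEquiv σ y
    have h2 : σ y = y ^ p := rfl
    rw [hφapp, map_sub, ← h2, h1, sub_self]
  -- trace fibers all have cardinality p^(m-1)
  have hsurj : Function.Surjective Tr := Algebra.trace_surjective (ZMod p) F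
  have htrfib : ∀ c0 : ZMod p,
      (Finset.univ.filter fun y : F => Tr y = c0).card = p ^ (m - 1) := by
    have hall : ∀ c0 : ZMod p, (Finset.univ.filter fun y : F => Tr y = c0).card
        = (Finset.univ.filter fun y : F => Tr y = 0).card := by
      intro c0
      obtain ⟨y0, hy0⟩ := hsurj c0
      exact fiber_card_eq' Tr.toAddMonoidHom y0 hy0
    have hsum : ∑ c0 : ZMod p, (Finset.univ.filter fun y : F => Tr y = c0).card
        = Fintype.card F := by
      rw [Finset.sum_card_fiberwise_eq_card_filter]
      simp
    rw [Finset.sum_congr rfl (fun c0 _ => hall c0), Finset.sum_const, Finset.card_univ,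
      ZMod.card, smul_eq_mul, hF] at hsum
    have h0 : (Finset.univ.filter fun y : F => Tr y = 0).card = p ^ (m - 1) := by
      have : p * (Finset.univ.filter fun y : F => Tr y = 0).card = p * p ^ (m - 1) := by
        rw [hsum, ← pow_succ']
        congr 1
        omega
      exact Nat.eq_of_mul_eq_mul_left hp.pos this
    intro c0; rw [hall c0, h0]
  -- nonempty fibers of φ have cardinality p
  have hfib : ∀ c0 : F, (∃ y, φ y = c0) →
      (Finset.univ.filter fun y : F => φ y = c0).card = p := by
    intro c0 ⟨y0, hy0⟩
    rw [fiber_card_eq' φ y0 hy0, hker]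
  -- image of φ equals kernel of trace
  have himcard : (Finset.univ.image φ).card * p = p ^ m := by
    have hsum : ∑ c0 ∈ Finset.univ.image φ,
        (Finset.univ.filter fun y : F => φ y = c0).card = Fintype.card F := by
      rw [Finset.sum_card_fiberwise_eq_card_filter]
      have : (Finset.univ.filter fun y : F => φ y ∈ Finset.univ.image φ) = Finset.univ := by
        apply Finset.filter_true_of_mem
        intro y _; exact Finset.mem_image_of_mem φ (Finset.mem_univ y)
      rw [this, Finset.card_univ]
    rw [← hF, ← hsum, Finset.sum_congr rfl fun c0 hc0 => hfib c0 (by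
      rw [Finset.mem_image] at hc0; obtain ⟨y, -, hy⟩ := hc0; exact ⟨y, hy⟩)]
    rw [Finset.sum_const, smul_eq_mul]
  have himeq : Finset.univ.image φ = Finset.univ.filter fun y : F => Tr y = 0 := by
    apply Finset.eq_of_subset_of_card_le
    · intro c0 hc0
      rw [Finset.mem_image] at hc0
      obtain ⟨y, -, rfl⟩ := hc0
      rw [Finset.mem_filter]
      exact ⟨Finset.mem_univ _, htr0 y⟩
    · rw [htrfib 0]
      have h2 : (Finset.univ.image φ).card * p = p ^ (m - 1) * p := by
        rw [himcard, ← pow_succ]; congr 1; omega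
      have h3 := Nat.eq_of_mul_eq_mul_right hp.pos h2
      omega
  -- conclude
  have hmain : (Finset.univ.filter fun y : F => y ^ p - y = c)
      = (Finset.univ.filter fun y : F => φ y = c) := rfl
  rw [hmain]
  by_cases h : Tr c = 0
  · rw [if_pos h]
    apply hfib
    have : c ∈ Finset.univ.image φ := by
      rw [himeq, Finset.mem_filter]; exact ⟨Finset.mem_univ _, h⟩
    rw [Finset.mem_image] at this
    obtain ⟨y, -, hy⟩ := this; exact ⟨y, hy⟩
  · rw [if_neg h]
    rw [Finset.card_eq_zero, Finset.filter_eq_empty_iff]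
    intro y _
    intro hy
    exact h (hy ▸ htr0 y)

private lemma card_kth_roots_one' (F : Type) [Field F] [Fintype F] [DecidableEq F] {k : ℕ}
    (hk : 0 < k) (hdvd : k ∣ Fintype.card F - 1) :
    (Finset.univ.filter fun u : F => u ^ k = 1).card = k := by
  have hN : 0 < Fintype.card F - 1 := by
    have := Fintype.one_lt_card (α := F)
    omega
  obtain ⟨g, hg⟩ := IsCyclic.exists_generator (α := Fˣ)
  have horder : orderOf g = Fintype.card F - 1 := by
    rw [orderOf_eq_card_of_forall_mem_zpowers hg, Nat.card_eq_fintype_card, Fintype.card_units]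
  set d := (Fintype.card F - 1) / k with hd
  have hddvd : d ∣ Fintype.card F - 1 := Nat.div_dvd_of_dvd hdvd
  have hord : orderOf ((g ^ d : Fˣ) : F) = k := by
    rw [orderOf_units, orderOf_pow, horder, Nat.gcd_eq_right hddvd, hd,
      Nat.div_div_self hdvd (by omega)]
  have hζ : IsPrimitiveRoot ((g ^ d : Fˣ) : F) k := by
    rw [← hord]; exact IsPrimitiveRoot.orderOf _
  have hset : (Finset.univ.filter fun u : F => u ^ k = 1) = Polynomial.nthRootsFinset k (1 : F) := by
    ext u
    rw [Finset.mem_filter, Polynomial.mem_nthRootsFinset hk]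
    simp
  rw [hset, hζ.card_nthRootsFinset]

private lemma zmod_is_kth_power' (p k n : ℕ) (hp : p.Prime)
    (F : Type) [Field F] [Fintype F] [DecidableEq F] [Algebra (ZMod p) F]
    (hnk : n * k = Fintype.card F - 1) (hk : 0 < k)
    (hpn : p - 1 ∣ n) (c : ZMod p) (hc : c ≠ 0) :
    ∃ x : F, x ≠ 0 ∧ x ^ k = algebraMap (ZMod p) F c := by
  haveI : Fact p.Prime := ⟨hp⟩
  have hN : 0 < Fintype.card F - 1 := by
    have := Fintype.one_lt_card (α := F)
    omega
  have hn0 : 0 < n := by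
    rcases Nat.eq_zero_or_pos n with h | h
    · rw [h] at hnk; omega
    · exact h
  have hcne : (algebraMap (ZMod p) F) c ≠ 0 := fun h =>
    hc ((algebraMap (ZMod p) F).injective (h.trans (map_zero _).symm))
  set cu : Fˣ := Units.mk0 _ hcne with hcu
  obtain ⟨g, hg⟩ := IsCyclic.exists_generator (α := Fˣ)
  have horder : orderOf g = Fintype.card F - 1 := by
    rw [orderOf_eq_card_of_forall_mem_zpowers hg, Nat.card_eq_fintype_card, Fintype.card_units]
  have hcun : cu ^ n = 1 := by
    obtain ⟨s, hs⟩ := hpn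
    apply Units.ext
    rw [Units.val_pow_eq_pow_val, hcu, Units.val_mk0, Units.val_one, ← map_pow, hs, pow_mul,
      ZMod.pow_card_sub_one_eq_one hc, one_pow, map_one]
  obtain ⟨t, ht⟩ := (mem_powers_iff_mem_zpowers.2 (hg cu))
  change g ^ t = cu at ht
  have hdvd2 : orderOf g ∣ t * n := by
    apply orderOf_dvd_of_pow_eq_one
    rw [pow_mul, ht, hcun]
  rw [horder, ← hnk] at hdvd2
  have hkt : k ∣ t := by
    have : n * k ∣ n * t := by
      rw [mul_comm t n] at hdvd2; exact hdvd2
    exact (mul_dvd_mul_iff_left (by omega : n ≠ 0)).mp this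
  obtain ⟨j, hj⟩ := hkt
  refine ⟨((g ^ j : Fˣ) : F), Units.ne_zero _, ?_⟩
  rw [← Units.val_pow_eq_pow_val, ← pow_mul, mul_comm j k, ← hj, ht]
  rfl

theorem stmt12 (p k m n : ℕ) (hp : p.Prime) (hm : 0 < m) (hk : 0 < k)
    (hkdvd : k ∣ (p ^ m - 1) / (p - 1)) (hn : n * k = p ^ m - 1)
    (hnprim : IsPrimitiveDivisor n p m)
    (F : Type) [Field F] [Fintype F] [DecidableEq F] [Algebra (ZMod p) F]
    (hF : Fintype.card F = p ^ m) :
    ∀ β : F,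
      ((1 : ℂ) +
        ((Finset.univ.filter fun xy : F × F => xy.2 ^ p - xy.2 = β * xy.1 ^ k).card : ℂ))
        = (p : ℂ) ^ m + (p : ℂ) + (k : ℂ) * ((p : ℂ) - 1) * paleyEig p F k β
      ∧ ∃ z : ℤ, paleyEig p F k β = (z : ℂ) := by
  intro β
  haveI : Fact p.Prime := ⟨hp⟩
  set Tr := Algebra.trace (ZMod p) F with hTrdef
  set Rk : Finset F := Finset.image (fun x : F => x ^ k)
    (Finset.univ.filter fun x : F => x ≠ 0) with hRkdef
  have hq2 : 2 ≤ p ^ m := by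
    have := Nat.one_lt_pow (by omega : m ≠ 0) hp.one_lt
    omega
  have hcard1 : Fintype.card F - 1 = n * k := by rw [hF, hn]
  have hn0 : 0 < n := by
    rcases Nat.eq_zero_or_pos n with h | h
    · rw [h, zero_mul] at hn; omega
    · exact h
  -- p - 1 divides n
  have hdvd_pm1 : p - 1 ∣ p ^ m - 1 := by
    have := Nat.sub_dvd_pow_sub_pow p 1 m
    rwa [one_pow] at this
  have hp1 : p - 1 ∣ n := by
    obtain ⟨s, hs⟩ := hkdvd
    have h1 : (p - 1) * ((p ^ m - 1) / (p - 1)) = p ^ m - 1 := Nat.mul_div_cancel' hdvd_pm1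
    have h2 : n * k = ((p - 1) * s) * k := by
      rw [hn, ← h1, hs]; ring
    exact ⟨s, Nat.eq_of_mul_eq_mul_right hk h2⟩
  -- membership in Rk
  have hmemRk : ∀ r : F, r ∈ Rk ↔ ∃ x : F, x ≠ 0 ∧ x ^ k = r := by
    intro r
    rw [hRkdef]
    simp only [Finset.mem_image, Finset.mem_filter, Finset.mem_univ, true_and]
  have hRkmul : ∀ r1 ∈ Rk, ∀ r2 ∈ Rk, r1 * r2 ∈ Rk := by
    intro r1 h1 r2 h2
    obtain ⟨x1, hx1, rfl⟩ := (hmemRk r1).1 h1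
    obtain ⟨x2, hx2, rfl⟩ := (hmemRk r2).1 h2
    exact (hmemRk _).2 ⟨x1 * x2, mul_ne_zero hx1 hx2, (mul_pow x1 x2 k)⟩
  have hRkzmod : ∀ c : ZMod p, c ≠ 0 → algebraMap (ZMod p) F c ∈ Rk := by
    intro c hc
    obtain ⟨x, hx, hxk⟩ := zmod_is_kth_power' p k n hp F hcard1.symm hk hp1 c hc
    exact (hmemRk _).2 ⟨x, hx, hxk⟩
  -- fibers of the k-th power map have cardinality k
  have hkdvdq : k ∣ Fintype.card F - 1 := ⟨n, by rw [hcard1]; ring⟩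
  have hfibk : ∀ r ∈ Rk,
      ((Finset.univ.filter fun x : F => x ≠ 0).filter fun x => x ^ k = r).card = k := by
    intro r hr
    obtain ⟨x0, hx0, rfl⟩ := (hmemRk r).1 hr
    have hbij : ((Finset.univ.filter fun x : F => x ≠ 0).filter fun x => x ^ k = x0 ^ k).card
        = (Finset.univ.filter fun u : F => u ^ k = 1).card := by
      apply Finset.card_nbij' (fun x => x * x0⁻¹) (fun u => u * x0)
      · intro a ha
        simp only [Finset.mem_coe, Finset.mem_filter, Finset.mem_univ, true_and] at ha ⊢
        rw [mul_pow, ha.2, inv_pow, mul_inv_cancel₀ (pow_ne_zero k hx0)]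
      · intro u hu
        simp only [Finset.mem_coe, Finset.mem_filter, Finset.mem_univ, true_and] at hu ⊢
        have hu0 : u ≠ 0 := by
          intro h; rw [h, zero_pow (by omega : k ≠ 0)] at hu; exact one_ne_zero hu.symm
        exact ⟨mul_ne_zero hu0 hx0, by rw [mul_pow, hu, one_mul]⟩
      · intro a ha
        field_simp
      · intro u hu
        field_simp
    rw [hbij, card_kth_roots_one' F hk hkdvdq]
  -- cardinality of Rk
  have hRkcard : Rk.card = n := by
    have hs := Finset.sum_card_fiberwise_eq_card_filter
      (Finset.univ.filter fun x : F => x ≠ 0) Rk (fun x => x ^ k)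
    have hright : (Finset.univ.filter fun x : F => x ≠ 0).filter (fun x => x ^ k ∈ Rk)
        = Finset.univ.filter fun x : F => x ≠ 0 := by
      apply Finset.filter_true_of_mem
      intro x hx
      rw [Finset.mem_filter] at hx
      exact (hmemRk _).2 ⟨x, hx.2, rfl⟩
    rw [Finset.filter_filter] at hright
    have hleft : ∑ r ∈ Rk, ((Finset.univ.filter fun x : F => x ≠ 0).filter
        fun x => x ^ k = r).card = Rk.card * k := by
      rw [Finset.sum_congr rfl hfibk, Finset.sum_const, smul_eq_mul]
    have hcount : (Finset.univ.filter fun x : F => x ≠ 0).card = Fintype.card F - 1 := by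
      rw [Finset.filter_ne', Finset.card_erase_of_mem (Finset.mem_univ 0), Finset.card_univ]
    rw [hleft] at hs
    have : Rk.card * k = n * k := by
      rw [hs]
      rw [show ((Finset.univ.filter fun x : F => x ≠ 0).filter fun i => i ^ k ∈ Rk)
          = (Finset.univ.filter fun x : F => x ≠ 0) from by
        rw [Finset.filter_filter]; exact hright]
      rw [hcount, hcard1]
    exact Nat.eq_of_mul_eq_mul_right hk this
  -- the trace-fiber counts inside Rk
  set A := (Rk.filter fun r => Tr (β * r) = 0).card with hAdef
  set B := (Rk.filter fun r => Tr (β * r) = 1).card with hBdef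
  have hTc : ∀ c : ZMod p, c ≠ 0 → (Rk.filter fun r => Tr (β * r) = c).card = B := by
    intro c hc
    rw [hBdef]
    apply Finset.card_nbij' (fun r => algebraMap (ZMod p) F c⁻¹ * r)
      (fun r => algebraMap (ZMod p) F c * r)
    · intro r hr
      simp only [Finset.mem_coe, Finset.mem_filter] at hr ⊢
      refine ⟨hRkmul _ (hRkzmod c⁻¹ (inv_ne_zero hc)) _ hr.1, ?_⟩
      have : β * (algebraMap (ZMod p) F c⁻¹ * r) = c⁻¹ • (β * r) := by
        rw [Algebra.smul_def]; ring
      rw [this, map_smul, hr.2, smul_eq_mul, inv_mul_cancel₀ hc]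
    · intro r hr
      simp only [Finset.mem_coe, Finset.mem_filter] at hr ⊢
      refine ⟨hRkmul _ (hRkzmod c hc) _ hr.1, ?_⟩
      have : β * (algebraMap (ZMod p) F c * r) = c • (β * r) := by
        rw [Algebra.smul_def]; ring
      rw [this, map_smul, hr.2, smul_eq_mul, mul_one]
    · intro r _
      beta_reduce
      rw [← mul_assoc, ← map_mul, mul_inv_cancel₀ hc, map_one, one_mul]
    · intro r _
      beta_reduce
      rw [← mul_assoc, ← map_mul, inv_mul_cancel₀ hc, map_one, one_mul]
  have hsumT : A + (p - 1) * B = n := by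
    have hs := Finset.sum_card_fiberwise_eq_card_filter Rk (Finset.univ : Finset (ZMod p))
      (fun r => Tr (β * r))
    rw [Finset.filter_true_of_mem (fun r _ => Finset.mem_univ _), hRkcard] at hs
    rw [← Finset.add_sum_erase _ _ (Finset.mem_univ (0 : ZMod p))] at hs
    rw [Finset.sum_congr rfl (fun c hc => hTc c (Finset.ne_of_mem_erase hc)),
      Finset.sum_const, smul_eq_mul, Finset.card_erase_of_mem (Finset.mem_univ 0),
      Finset.card_univ, ZMod.card] at hs
    exact hs
  -- the primitive root of unity
  have hζ : IsPrimitiveRoot (zetaP p) p := by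
    unfold zetaP; exact_mod_cast Complex.isPrimitiveRoot_exp p hp.ne_zero
  have hzsum : ∑ c : ZMod p, (zetaP p) ^ (c.val) = 0 := by
    have h1 : ∑ c : ZMod p, (zetaP p) ^ (c.val) = ∑ i ∈ Finset.range p, (zetaP p) ^ i := by
      apply Finset.sum_nbij' (fun c : ZMod p => c.val) (fun i : ℕ => (i : ZMod p))
      · intro a _; exact Finset.mem_range.2 (ZMod.val_lt a)
      · intro i _; exact Finset.mem_univ _
      · intro a _; exact ZMod.natCast_rightInverse a
      · intro i hi; exact ZMod.val_cast_of_lt (Finset.mem_range.1 hi)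
      · intro a _; rfl
    have h2 : (∑ i ∈ Finset.range p, (zetaP p) ^ i) * (zetaP p - 1)
        = (zetaP p) ^ p - 1 := geom_sum_mul _ _
    rw [hζ.pow_eq_one, sub_self] at h2
    rcases mul_eq_zero.1 h2 with h | h
    · rw [h1, h]
    · exact absurd (sub_eq_zero.1 h) (hζ.ne_one hp.one_lt)
  have hzerase : ∑ c ∈ (Finset.univ : Finset (ZMod p)).erase 0, (zetaP p) ^ (c.val) = -1 := by
    have := Finset.add_sum_erase (Finset.univ : Finset (ZMod p))
      (fun c => (zetaP p) ^ (c.val)) (Finset.mem_univ 0)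
    simp only [hzsum, ZMod.val_zero, pow_zero] at this
    linear_combination this
  -- compute the eigenvalue
  have hpaley : paleyEig p F k β = (A : ℂ) - B := by
    rw [paleyEig, ← hRkdef, ← hTrdef]
    rw [← Finset.sum_fiberwise' Rk (fun r => Tr (β * r)) (fun c => (zetaP p) ^ (c.val))]
    rw [← Finset.add_sum_erase _ _ (Finset.mem_univ (0 : ZMod p))]
    have h0 : ∑ r ∈ Rk.filter (fun r => Tr (β * r) = 0), (zetaP p) ^ ((0 : ZMod p).val)
        = (A : ℂ) := by
      rw [Finset.sum_const, ZMod.val_zero, pow_zero, nsmul_eq_mul, mul_one, hAdef]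
    rw [h0]
    have h1 : ∑ c ∈ (Finset.univ : Finset (ZMod p)).erase 0,
        (∑ r ∈ Rk.filter (fun r => Tr (β * r) = c), (zetaP p) ^ (c.val))
        = ∑ c ∈ (Finset.univ : Finset (ZMod p)).erase 0, (B : ℂ) * (zetaP p) ^ (c.val) := by
      apply Finset.sum_congr rfl
      intro c hc
      rw [Finset.sum_const, nsmul_eq_mul, hTc c (Finset.ne_of_mem_erase hc)]
    rw [h1, ← Finset.mul_sum, hzerase]
    ring
  -- count the points
  have hNcount : (Finset.univ.filter fun xy : F × F => xy.2 ^ p - xy.2 = β * xy.1 ^ k).card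
      = p * (1 + k * A) := by
    have hstep1 : (Finset.univ.filter fun xy : F × F => xy.2 ^ p - xy.2 = β * xy.1 ^ k).card
        = ∑ x : F, (Finset.univ.filter fun y : F => y ^ p - y = β * x ^ k).card := by
      rw [Finset.card_eq_sum_card_fiberwise
        (f := Prod.fst) (t := Finset.univ) (fun a _ => Finset.mem_univ _)]
      apply Finset.sum_congr rfl
      intro x _
      apply Finset.card_nbij' (fun xy => xy.2) (fun y => (x, y))
      · intro a ha
        simp only [Finset.mem_coe, Finset.mem_filter, Finset.mem_univ, true_and] at ha ⊢
        rw [← ha.2]; exact ha.1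
      · intro y hy
        simp only [Finset.mem_coe, Finset.mem_filter, Finset.mem_univ, true_and] at hy ⊢
        exact ⟨hy, by trivial⟩
      · intro a ha
        simp only [Finset.mem_coe, Finset.mem_filter, Finset.mem_univ, true_and] at ha
        rw [← ha.2]
      · intro y _
        rfl
    rw [hstep1]
    have hstep2 : ∀ x : F, (Finset.univ.filter fun y : F => y ^ p - y = β * x ^ k).card
        = if Tr (β * x ^ k) = 0 then p else 0 := fun x =>
      AS_count' p m hp hm F hF (β * x ^ k)
    rw [Finset.sum_congr rfl (fun x _ => hstep2 x)]
    have hstep3 : ∑ x : F, (if Tr (β * x ^ k) = 0 then p else 0)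
        = p * (Finset.univ.filter fun x : F => Tr (β * x ^ k) = 0).card := by
      rw [Finset.sum_ite, Finset.sum_const_zero, add_zero, Finset.sum_const, smul_eq_mul,
        mul_comm]
    rw [hstep3]
    congr 1
    -- the count of x with Tr (β x^k) = 0
    rw [Finset.card_filter]
    rw [← Finset.add_sum_erase _ _ (Finset.mem_univ (0 : F))]
    have h00 : (if Tr (β * (0 : F) ^ k) = 0 then 1 else 0) = 1 := by
      rw [zero_pow (by omega : k ≠ 0), mul_zero, map_zero, if_pos rfl]
    rw [h00]
    congr 1
    have herase : (Finset.univ : Finset F).erase 0 = Finset.univ.filter fun x : F => x ≠ 0 := by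
      rw [Finset.filter_ne']
    rw [herase]
    rw [Finset.sum_comp (fun r : F => if Tr (β * r) = 0 then (1 : ℕ) else 0) (fun x : F => x ^ k)]
    rw [← hRkdef]
    have : ∑ r ∈ Rk, ((Finset.univ.filter fun x : F => x ≠ 0).filter
          fun x => x ^ k = r).card • (if Tr (β * r) = 0 then (1 : ℕ) else 0)
        = ∑ r ∈ Rk, k * (if Tr (β * r) = 0 then (1 : ℕ) else 0) := by
      apply Finset.sum_congr rfl
      intro r hr
      rw [hfibk r hr, smul_eq_mul]
    rw [this, ← Finset.mul_sum, ← Finset.card_filter]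
  -- final assembly
  have hc2 : (A : ℂ) + ((p : ℂ) - 1) * B = n := by
    have h := congrArg (Nat.cast : ℕ → ℂ) hsumT
    push_cast [Nat.cast_sub hp.one_lt.le] at h
    linear_combination h
  have hc3 : (n : ℂ) * k = (p : ℂ) ^ m - 1 := by
    have h : n * k + 1 = p ^ m := by omega
    have h2 := congrArg (Nat.cast : ℕ → ℂ) h
    push_cast at h2
    linear_combination h2
  constructor
  · rw [hNcount, hpaley]
    push_cast
    linear_combination (k : ℂ) * hc2 + hc3
  · exact ⟨(A : ℤ) - B, by rw [hpaley]; push_cast; ring⟩
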